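/- Under the assumptions of the pessimistic-prior setting, define R(θ̂) = (∫_{θ̂}^{θ̄} v(θ)g(θ)/θ dθ) / (∫_{θ̲}^{θ̂} v(θ)g(θ) dθ). Then R is strictly decreasing on (θ̲, θ̃) and weakly increasing on (θ̃, θ̄), where θ̃ is the zero-crossing point of v. -/
import Mathlib


open MeasureTheory Set Filter intervalIntegral Topology

/-- Lemma A.2: under a pessimistic prior, `R(θ̂)` is strictly decreasing on `(θ̲, θ̃)`
and weakly increasing on `(θ̃, θ̄)`. -/
theorem stmt3 (θlo θhi θtilde : ℝ) (g v : ℝ → ℝ)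
    (h0 : 0 < θlo) (hlh : θlo < θhi)
    (hgc : ContinuousOn g (Icc θlo θhi))
    (hgpos : ∀ θ ∈ Icc θlo θhi, 0 < g θ)
    (hgint : (∫ θ in θlo..θhi, g θ) = 1)
    (hvC1 : ContDiff ℝ 1 v)
    (hvmono : MonotoneOn v (Icc θlo θhi))
    (hEv : (∫ θ in θlo..θhi, v θ * g θ) ≤ 0)
    (htilde : θtilde ∈ Ioo θlo θhi)
    (hneg : ∀ θ ∈ Icc θlo θhi, θ < θtilde → v θ < 0)
    (hnonneg : ∀ θ ∈ Icc θlo θhi, θtilde ≤ θ → 0 ≤ v θ)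
    (R : ℝ → ℝ)
    (hR : ∀ θhat, R θhat =
      (∫ θ in θhat..θhi, v θ * g θ / θ) / (∫ θ in θlo..θhat, v θ * g θ)) :
    StrictAntiOn R (Ioo θlo θtilde) ∧ MonotoneOn R (Ioo θtilde θhi) := by
  obtain ⟨hlt, hth⟩ := htilde
  have hRe : R = fun u =>
      (∫ θ in u..θhi, v θ * g θ / θ) / (∫ θ in θlo..u, v θ * g θ) := funext hR
  subst hRe
  set H : ℝ → ℝ := fun θ => v θ * g θ / θ with hH
  set F : ℝ → ℝ := fun θ => v θ * g θ with hF
  have hvc : Continuous v := hvC1.continuous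
  have lm : θlo ∈ Icc θlo θhi := left_mem_Icc.mpr hlh.le
  have rm : θhi ∈ Icc θlo θhi := right_mem_Icc.mpr hlh.le
  have hFc : ContinuousOn F (Icc θlo θhi) := by
    rw [hF]; exact hvc.continuousOn.mul hgc
  have hHc : ContinuousOn H (Icc θlo θhi) := by
    rw [hH]
    exact (hvc.continuousOn.mul hgc).div continuousOn_id
      (fun θ hθ => (h0.trans_le hθ.1).ne')
  have hFi : ∀ a b, a ∈ Icc θlo θhi → b ∈ Icc θlo θhi →
      IntervalIntegrable F volume a b :=
    fun a b ha hb => (hFc.mono (uIcc_subset_Icc ha hb)).intervalIntegrable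
  have hHi : ∀ a b, a ∈ Icc θlo θhi → b ∈ Icc θlo θhi →
      IntervalIntegrable H volume a b :=
    fun a b ha hb => (hHc.mono (uIcc_subset_Icc ha hb)).intervalIntegrable
  -- negativity of the denominator
  have hDneg1 : ∀ x, θlo < x → x ≤ θtilde → (∫ θ in θlo..x, F θ) < 0 := by
    intro x hx1 hx2
    have hxIcc : x ∈ Icc θlo θhi := ⟨hx1.le, hx2.trans hth.le⟩
    have hpos : 0 < ∫ θ in θlo..x, -F θ := by
      apply intervalIntegral_pos_of_pos_on ((hFi θlo x lm hxIcc).neg)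
      · intro θ hθ
        have hθIcc : θ ∈ Icc θlo θhi := ⟨hθ.1.le, hθ.2.le.trans hxIcc.2⟩
        have hv : v θ < 0 := hneg θ hθIcc (hθ.2.trans_le hx2)
        have hg := hgpos θ hθIcc
        have hFθ : F θ < 0 := by rw [hF]; exact mul_neg_of_neg_of_pos hv hg
        simp only [Pi.neg_apply]
        linarith
      · exact hx1
    rw [intervalIntegral.integral_neg] at hpos
    linarith
  have hDneg : ∀ x, θlo < x → x < θhi → (∫ θ in θlo..x, F θ) < 0 := by
    intro x hx1 hx2
    rcases le_or_gt x θtilde with hc | hc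
    · exact hDneg1 x hx1 hc
    · have hxIcc : x ∈ Icc θlo θhi := ⟨hx1.le, hx2.le⟩
      have htIcc : θtilde ∈ Icc θlo θhi := ⟨hlt.le, hth.le⟩
      by_cases hex : ∃ θ₀ ∈ Ico θtilde x, 0 < v θ₀
      · obtain ⟨θ₀, hθ₀, hv0⟩ := hex
        have hθ₀Icc : θ₀ ∈ Icc θlo θhi := ⟨hlt.le.trans hθ₀.1, hθ₀.2.le.trans hx2.le⟩
        have hpos : 0 < ∫ θ in x..θhi, F θ := by
          apply intervalIntegral_pos_of_pos_on (hFi x θhi hxIcc rm)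
          · intro θ hθ
            have hθIcc : θ ∈ Icc θlo θhi := ⟨(hx1.trans hθ.1).le, hθ.2.le⟩
            have hvθ : 0 < v θ :=
              hv0.trans_le (hvmono hθ₀Icc hθIcc (hθ₀.2.le.trans hθ.1.le))
            have hFθ : 0 < F θ := by rw [hF]; exact mul_pos hvθ (hgpos θ hθIcc)
            exact hFθ
          · exact hx2
        have hadd := integral_add_adjacent_intervals (hFi θlo x lm hxIcc)
          (hFi x θhi hxIcc rm)
        linarith
      · push_neg at hex
        have hzero : ∀ θ ∈ Icc θtilde x, v θ = 0 := by
          intro θ hθ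
          rcases lt_or_eq_of_le hθ.2 with h | h
          · exact le_antisymm (hex θ ⟨hθ.1, h⟩)
              (hnonneg θ ⟨hlt.le.trans hθ.1, h.le.trans hx2.le⟩ hθ.1)
          · subst h
            have h1 : Tendsto v (𝓝[<] θ) (𝓝 (v θ)) :=
              (hvc.tendsto θ).mono_left nhdsWithin_le_nhds
            have heq : v =ᶠ[𝓝[<] θ] (fun _ => (0:ℝ)) := by
              filter_upwards [Ico_mem_nhdsLT_of_mem (⟨hc, le_rfl⟩ : θ ∈ Ioc θtilde θ)]
                with u hu
              exact le_antisymm (hex u hu)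
                (hnonneg u ⟨hlt.le.trans hu.1, hu.2.le.trans hx2.le⟩ hu.1)
            have h2 : Tendsto v (𝓝[<] θ) (𝓝 0) :=
              (tendsto_congr' heq).mpr tendsto_const_nhds
            exact tendsto_nhds_unique h1 h2
        have hzint : (∫ θ in θtilde..x, F θ) = 0 := by
          have heq : EqOn F (fun _ => (0:ℝ)) (uIcc θtilde x) := by
            intro θ hθ
            rw [uIcc_of_le hc.le] at hθ
            rw [hF]
            simp [hzero θ hθ]
          rw [integral_congr heq]
          simp
        have hadd := integral_add_adjacent_intervals (hFi θlo θtilde lm htIcc)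
          (hFi θtilde x htIcc hxIcc)
        have := hDneg1 θtilde hlt le_rfl
        linarith
  -- key inequality: D x / x + N x ≤ 0, strict if x < θtilde
  have hKkey : ∀ x, θlo < x → x < θhi →
      ((∫ θ in θlo..x, F θ) / x + (∫ θ in x..θhi, H θ) ≤ 0)
      ∧ (x < θtilde →
        (∫ θ in θlo..x, F θ) / x + (∫ θ in x..θhi, H θ) < 0) := by
    intro x hx1 hx2
    have hxpos : 0 < x := h0.trans hx1
    have hxIcc : x ∈ Icc θlo θhi := ⟨hx1.le, hx2.le⟩
    have hcpos : 0 < (max x θtilde)⁻¹ :=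
      inv_pos.mpr (hxpos.trans_le (le_max_left _ _))
    have hWc : ContinuousOn (fun θ => F θ * ((max x θ)⁻¹ - (max x θtilde)⁻¹))
        (Icc θlo θhi) := by
      apply hFc.mul
      apply ContinuousOn.sub _ continuousOn_const
      exact ((continuous_const.max continuous_id).continuousOn).inv₀
        (fun θ hθ => (hxpos.trans_le (le_max_left x θ)).ne')
    have hWi : ∀ a b, a ∈ Icc θlo θhi → b ∈ Icc θlo θhi →
        IntervalIntegrable (fun θ => F θ * ((max x θ)⁻¹ - (max x θtilde)⁻¹))
          volume a b :=
      fun a b ha hb => (hWc.mono (uIcc_subset_Icc ha hb)).intervalIntegrable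
    have e1 : (∫ θ in θlo..x, F θ) / x =
        (∫ θ in θlo..x, F θ * ((max x θ)⁻¹ - (max x θtilde)⁻¹))
          + (∫ θ in θlo..x, F θ) * (max x θtilde)⁻¹ := by
      rw [← intervalIntegral.integral_div, ← intervalIntegral.integral_mul_const,
        ← intervalIntegral.integral_add (hWi θlo x lm hxIcc)
          ((hFi θlo x lm hxIcc).mul_const _)]
      apply integral_congr
      intro θ hθ
      rw [uIcc_of_le hx1.le] at hθ
      have hmx : max x θ = x := max_eq_left hθ.2
      simp only [hmx]
      ring
    have e2 : (∫ θ in x..θhi, H θ) =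
        (∫ θ in x..θhi, F θ * ((max x θ)⁻¹ - (max x θtilde)⁻¹))
          + (∫ θ in x..θhi, F θ) * (max x θtilde)⁻¹ := by
      rw [← intervalIntegral.integral_mul_const,
        ← intervalIntegral.integral_add (hWi x θhi hxIcc rm)
          ((hFi x θhi hxIcc rm).mul_const _)]
      apply integral_congr
      intro θ hθ
      rw [uIcc_of_le hx2.le] at hθ
      have hmx : max x θ = θ := max_eq_right hθ.1
      simp only [hH, hF, hmx]
      ring
    have hadd := integral_add_adjacent_intervals (hFi θlo x lm hxIcc)
      (hFi x θhi hxIcc rm)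
    have hmul : (∫ θ in θlo..x, F θ) * (max x θtilde)⁻¹
        + (∫ θ in x..θhi, F θ) * (max x θtilde)⁻¹
        = (∫ θ in θlo..θhi, F θ) * (max x θtilde)⁻¹ := by
      rw [← add_mul, hadd]
    have hEc : (∫ θ in θlo..θhi, F θ) * (max x θtilde)⁻¹ ≤ 0 :=
      mul_nonpos_iff.mpr (Or.inr ⟨hEv, hcpos.le⟩)
    have hptle : ∀ θ ∈ Icc θlo θhi,
        F θ * ((max x θ)⁻¹ - (max x θtilde)⁻¹) ≤ 0 := by
      intro θ hθ
      rcases lt_or_ge θ θtilde with h | h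
      · have hFneg : F θ ≤ 0 := by
          rw [hF]; exact (mul_neg_of_neg_of_pos (hneg θ hθ h) (hgpos θ hθ)).le
        have hw : (max x θtilde)⁻¹ ≤ (max x θ)⁻¹ :=
          inv_anti₀ (hxpos.trans_le (le_max_left x θ))
            (max_le_max le_rfl h.le)
        exact mul_nonpos_iff.mpr (Or.inr ⟨hFneg, by linarith⟩)
      · have hFnn : 0 ≤ F θ := by
          rw [hF]; exact mul_nonneg (hnonneg θ hθ h) (hgpos θ hθ).le
        have hw : (max x θ)⁻¹ ≤ (max x θtilde)⁻¹ :=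
          inv_anti₀ (hxpos.trans_le (le_max_left x θtilde))
            (max_le_max le_rfl h)
        exact mul_nonpos_iff.mpr (Or.inl ⟨hFnn, by linarith⟩)
    have hnonposInt : ∀ a b, a ∈ Icc θlo θhi → b ∈ Icc θlo θhi → a ≤ b →
        (∫ θ in a..b, F θ * ((max x θ)⁻¹ - (max x θtilde)⁻¹)) ≤ 0 := by
      intro a b ha hb hab
      have h1 : 0 ≤ ∫ θ in a..b, -(F θ * ((max x θ)⁻¹ - (max x θtilde)⁻¹)) :=
        intervalIntegral.integral_nonneg hab
          (fun u hu => neg_nonneg.mpr (hptle u ⟨ha.1.trans hu.1, hu.2.trans hb.2⟩))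
      rw [intervalIntegral.integral_neg] at h1
      linarith
    have hI1le := hnonposInt θlo x lm hxIcc hx1.le
    have hI2 := hnonposInt x θhi hxIcc rm hx2.le
    constructor
    · linarith [e1, e2, hmul, hEc, hI1le, hI2]
    · intro hxt
      have hI1 : (∫ θ in θlo..x, F θ * ((max x θ)⁻¹ - (max x θtilde)⁻¹)) < 0 := by
        have hpos : 0 < ∫ θ in θlo..x,
            -(F θ * ((max x θ)⁻¹ - (max x θtilde)⁻¹)) := by
          apply intervalIntegral_pos_of_pos_on ((hWi θlo x lm hxIcc).neg)
          · intro θ hθ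
            have hθIcc : θ ∈ Icc θlo θhi := ⟨hθ.1.le, hθ.2.le.trans hx2.le⟩
            have hFneg : F θ < 0 := by
              rw [hF]
              exact mul_neg_of_neg_of_pos (hneg θ hθIcc (hθ.2.trans hxt))
                (hgpos θ hθIcc)
            have hmaxθ : max x θ = x := max_eq_left hθ.2.le
            have hmaxt : max x θtilde = θtilde := max_eq_right hxt.le
            have hwpos : 0 < (max x θ)⁻¹ - (max x θtilde)⁻¹ := by
              rw [hmaxθ, hmaxt]
              have := inv_strictAnti₀ hxpos hxt
              linarith
            simp only [Pi.neg_apply]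
            exact neg_pos.mpr (mul_neg_of_neg_of_pos hFneg hwpos)
          · exact hx1
        rw [intervalIntegral.integral_neg] at hpos
        linarith
      linarith [e1, e2, hmul, hEc, hI2, hI1]
  -- derivatives
  have hFat : ∀ x ∈ Ioo θlo θhi, ContinuousAt F x := fun x hx =>
    (hFc x (Ioo_subset_Icc_self hx)).continuousAt (Icc_mem_nhds hx.1 hx.2)
  have hHat : ∀ x ∈ Ioo θlo θhi, ContinuousAt H x := fun x hx =>
    (hHc x (Ioo_subset_Icc_self hx)).continuousAt (Icc_mem_nhds hx.1 hx.2)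
  have hDder : ∀ x ∈ Ioo θlo θhi,
      HasDerivAt (fun u => ∫ θ in θlo..u, F θ) (F x) x := fun x hx =>
    intervalIntegral.integral_hasDerivAt_right (hFi θlo x lm ⟨hx.1.le, hx.2.le⟩)
      (ContinuousOn.stronglyMeasurableAtFilter isOpen_Ioo
        (hFc.mono Ioo_subset_Icc_self) x hx)
      (hFat x hx)
  have hNder : ∀ x ∈ Ioo θlo θhi,
      HasDerivAt (fun u => ∫ θ in u..θhi, H θ) (-H x) x := fun x hx =>
    intervalIntegral.integral_hasDerivAt_left (hHi x θhi ⟨hx.1.le, hx.2.le⟩ rm)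
      (ContinuousOn.stronglyMeasurableAtFilter isOpen_Ioo
        (hHc.mono Ioo_subset_Icc_self) x hx)
      (hHat x hx)
  have hRder : ∀ x ∈ Ioo θlo θhi,
      HasDerivAt (fun u => (∫ θ in u..θhi, H θ) / (∫ θ in θlo..u, F θ))
        ((-H x * (∫ θ in θlo..x, F θ) - (∫ θ in x..θhi, H θ) * F x)
          / (∫ θ in θlo..x, F θ) ^ 2) x := by
    intro x hx
    exact (hNder x hx).div (hDder x hx) (hDneg x hx.1 hx.2).ne
  have hderiv : ∀ x ∈ Ioo θlo θhi,
      deriv (fun u => (∫ θ in u..θhi, H θ) / (∫ θ in θlo..u, F θ)) x =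
      (-(F x) * ((∫ θ in θlo..x, F θ) / x + (∫ θ in x..θhi, H θ)))
        / (∫ θ in θlo..x, F θ) ^ 2 := by
    intro x hx
    rw [(hRder x hx).deriv]
    have hxne : x ≠ 0 := (h0.trans hx.1).ne'
    have hHx : H x = F x / x := by rw [hH, hF]
    rw [hHx]
    congr 1
    field_simp
    ring
  constructor
  · apply strictAntiOn_of_deriv_neg (convex_Ioo θlo θtilde)
    · intro x hx
      exact ((hRder x ⟨hx.1, hx.2.trans hth⟩).continuousAt).continuousWithinAt
    · intro x hx
      rw [interior_Ioo] at hx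
      have hx' : x ∈ Ioo θlo θhi := ⟨hx.1, hx.2.trans hth⟩
      rw [hderiv x hx']
      apply div_neg_of_neg_of_pos
      · have hFneg : F x < 0 := by
          rw [hF]
          exact mul_neg_of_neg_of_pos
            (hneg x ⟨hx.1.le, (hx.2.trans hth).le⟩ hx.2)
            (hgpos x ⟨hx.1.le, (hx.2.trans hth).le⟩)
        have hK := (hKkey x hx.1 (hx.2.trans hth)).2 hx.2
        have h1 : 0 < -(F x) := by linarith
        have h2 := mul_neg_of_pos_of_neg h1 hK
        linarith [h2]
      · exact pow_two_pos_of_ne_zero (hDneg x hx.1 (hx.2.trans hth)).ne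
  · apply monotoneOn_of_deriv_nonneg (convex_Ioo θtilde θhi)
    · intro x hx
      exact ((hRder x ⟨hlt.trans hx.1, hx.2⟩).continuousAt).continuousWithinAt
    · rw [interior_Ioo]
      intro x hx
      exact ((hRder x ⟨hlt.trans hx.1, hx.2⟩).differentiableAt).differentiableWithinAt
    · intro x hx
      rw [interior_Ioo] at hx
      have hx' : x ∈ Ioo θlo θhi := ⟨hlt.trans hx.1, hx.2⟩
      rw [hderiv x hx']
      apply div_nonneg
      · have hFnn : 0 ≤ F x := by
          rw [hF]
          exact mul_nonneg (hnonneg x ⟨(hlt.trans hx.1).le, hx.2.le⟩ hx.1.le)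
            (hgpos x ⟨(hlt.trans hx.1).le, hx.2.le⟩).le
        have hK := (hKkey x (hlt.trans hx.1) hx.2).1
        have h2 := mul_nonneg hFnn (neg_nonneg.mpr hK)
        nlinarith [h2]
      · exact sq_nonneg _
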